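/- Let Σ be a finite alphabet, M a monoid, and Φ : Σ* → ◊M a monoid homomorphism with components Φ(w) = (σ(w), h(w)), such that σ(a) is nonempty for every letter a ∈ Σ. Let V ⊆ M. For each function m : Σ → M with m(a) ∈ σ(a) for all a ∈ Σ, let τ_m : (Σ × {0,1})* → M be the monoid homomorphism determined on generators by τ_m(a,0) = h(a) and τ_m(a,1) = m(a). Then {w ∈ Σ* : σ(w) ∩ V ≠ ∅} = ⋃_m {w ∈ Σ* : there exists i < |w| with τ_m(w^{(i)}) ∈ V}, the union being over all such functions m. -/
import Mathlib


/-- The multiplication of the unary Schützenberger product `◊M` on `Finset M × M`: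
`(S, m) * (T, n) = (S·n ∪ m·T, m·n)`. -/
def dMul {M : Type*} [Monoid M] [DecidableEq M] (p q : Finset M × M) : Finset M × M :=
  (p.1.image (fun s => s * q.2) ∪ q.1.image (fun t => p.2 * t), p.2 * q.2)

/-- `w^{(i)}`: the word over `Σ × 2` obtained from `w` by tagging the `i`-th letter with `1`
(`true`) and all other letters with `0` (`false`). -/
def marked {A : Type*} (w : List A) (i : ℕ) : FreeMonoid (A × Bool) :=
  FreeMonoid.ofList (w.mapIdx fun j c => (c, decide (j = i)))

private lemma tag_ne {A : Type*} : ∀ (u : List A) (g : ℕ → Bool), (∀ j < u.length, g j = false) →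
    u.mapIdx (fun j c => (c, g j)) = u.map (fun c => (c, false)) := by
  intro u
  induction u with
  | nil => intro g h; rfl
  | cons a t ih =>
    intro g h
    simp only [List.mapIdx_cons, List.map_cons, h 0 (by simp),
      ih (fun j => g (j + 1)) (fun j hj => h _ (by simpa using Nat.succ_lt_succ hj))]

/-- Let `Φ = (σ, h) : Σ* → ◊M` be a monoid homomorphism with `σ(a) ≠ ∅` for every letter
`a`, and `V ⊆ M`. For each choice function `m : Σ → M` with `m(a) ∈ σ(a)`, let `τ_m` be
the homomorphism `(Σ×2)* → M` sending `(a,0) ↦ h(a)` and `(a,1) ↦ m(a)`. Then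
`{w : σ(w) ∩ V ≠ ∅} = ⋃_m {w : ∃ i < |w|, τ_m(w^{(i)}) ∈ V}`. -/
theorem stmt14 {A M : Type*} [Fintype A] [Monoid M] [DecidableEq M]
    (Φ : List A → Finset M × M)
    (hone : Φ [] = (∅, 1))
    (hmul : ∀ v w : List A, Φ (v ++ w) = dMul (Φ v) (Φ w))
    (hne : ∀ a : A, (Φ [a]).1.Nonempty)
    (V : Set M) :
    {w : List A | ∃ t ∈ (Φ w).1, t ∈ V} =
      ⋃ (m : A → M) (_ : ∀ a : A, m a ∈ (Φ [a]).1),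
        {w : List A | ∃ i < w.length,
          (FreeMonoid.lift fun c : A × Bool => if c.2 then m c.1 else (Φ [c.1]).2)
            (marked w i) ∈ V} := by
  classical
  have h2one : (Φ []).2 = 1 := by rw [hone]
  have h2mul : ∀ v w : List A, (Φ (v ++ w)).2 = (Φ v).2 * (Φ w).2 := fun v w => by
    rw [hmul]; rfl
  -- product of `h` over a word with all-false tags
  have hprod : ∀ (m : A → M) (u : List A),
      ((u.map (fun c => (c, false))).map
        (fun c : A × Bool => if c.2 then m c.1 else (Φ [c.1]).2)).prod = (Φ u).2 := by
    intro m u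
    induction u with
    | nil => simp [h2one]
    | cons b t ih =>
      rw [List.map_map] at ih
      simp only [List.map_cons, List.prod_cons, ih, List.map_map]
      exact (h2mul [b] t).symm
  -- value of `τ_m` on a marked word, presented via a split
  have hmarked : ∀ (m : A → M) (u : List A) (a : A) (v : List A),
      (FreeMonoid.lift fun c : A × Bool => if c.2 then m c.1 else (Φ [c.1]).2)
        (marked (u ++ a :: v) u.length) = (Φ u).2 * m a * (Φ v).2 := by
    intro m u a v
    rw [marked, List.mapIdx_append, List.mapIdx_cons]
    rw [tag_ne u _ (fun j hj => by simp only [decide_eq_false_iff_not]; omega),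
        tag_ne v _ (fun j hj => by simp only [decide_eq_false_iff_not]; omega)]
    rw [FreeMonoid.lift_ofList]
    simp only [List.map_append, List.map_cons, List.prod_append, List.prod_cons, hprod]
    simp [mul_assoc]
  -- characterisation of `(Φ w).1`
  have aux : ∀ (w : List A) (t : M), t ∈ (Φ w).1 ↔
      ∃ u a v, w = u ++ a :: v ∧ ∃ s ∈ (Φ [a]).1, t = (Φ u).2 * s * (Φ v).2 := by
    intro w
    induction w with
    | nil =>
      intro t
      simp only [hone, Finset.notMem_empty, false_iff]
      rintro ⟨u, a, v, h, -⟩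
      cases u <;> simp at h
    | cons a w' ih =>
      intro t
      have key : Φ (a :: w') = dMul (Φ [a]) (Φ w') := hmul [a] w'
      rw [key]
      constructor
      · intro ht
        rcases Finset.mem_union.1 ht with h | h
        · rcases Finset.mem_image.1 h with ⟨s, hs, rfl⟩
          exact ⟨[], a, w', rfl, s, hs, by simp [h2one]⟩
        · rcases Finset.mem_image.1 h with ⟨t', ht', rfl⟩
          rcases (ih t').1 ht' with ⟨u, b, v, hw, s, hs, rfl⟩
          refine ⟨a :: u, b, v, by simp [hw], s, hs, ?_⟩
          have : (Φ (a :: u)).2 = (Φ [a]).2 * (Φ u).2 := h2mul [a] u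
          rw [this]; simp [mul_assoc]
      · rintro ⟨u, b, v, hw, s, hs, rfl⟩
        cases u with
        | nil =>
          simp only [List.nil_append, List.cons.injEq] at hw
          obtain ⟨rfl, rfl⟩ := hw
          exact Finset.mem_union_left _ (Finset.mem_image.2 ⟨s, hs, by simp [h2one]⟩)
        | cons c u' =>
          simp only [List.cons_append, List.cons.injEq] at hw
          obtain ⟨rfl, rfl⟩ := hw
          refine Finset.mem_union_right _ (Finset.mem_image.2
            ⟨(Φ u').2 * s * (Φ v).2, (ih _).2 ⟨u', b, v, rfl, s, hs, rfl⟩, ?_⟩)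
          have : (Φ (a :: u')).2 = (Φ [a]).2 * (Φ u').2 := h2mul [a] u'
          rw [this]; simp [mul_assoc]
  ext w
  simp only [Set.mem_setOf_eq, Set.mem_iUnion]
  constructor
  · rintro ⟨t, ht, htV⟩
    rcases (aux w t).1 ht with ⟨u, a, v, hw, s, hs, rfl⟩
    refine ⟨fun b => if b = a then s else (hne b).choose, fun b => ?_, u.length, ?_, ?_⟩
    · by_cases hb : b = a
      · subst hb; simpa using hs
      · simpa [hb] using (hne b).choose_spec
    · subst hw; simp
    · subst hw
      rw [hmarked (fun b => if b = a then s else (hne b).choose) u a v]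
      simpa using htV
  · rintro ⟨m, hm, i, hi, hτ⟩
    have hw : w = w.take i ++ w[i] :: w.drop (i + 1) := by
      conv_lhs => rw [← List.take_append_drop i w]
      rw [List.drop_eq_getElem_cons hi]
    have hlen : (w.take i).length = i := by simp [List.length_take]; omega
    refine ⟨_, (aux w _).2 ⟨w.take i, w[i], w.drop (i + 1), hw, m w[i], hm _, rfl⟩, ?_⟩
    have := hmarked m (w.take i) w[i] (w.drop (i + 1))
    rw [hlen] at this
    rw [← hw] at this
    rwa [this] at hτ
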